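/- arXiv:2310.02014 — 4 statements merged into one kernel-verified Lean document; each statement's English description precedes it below -/
import Mathlib

section
/- For a concave, strictly increasing, bounded-above utility U in C^2(ℝ) and X ∈ L^∞, μ_γ(X) → -E[X] as γ → 0+. -/
open MeasureTheory
open scoped ENNReal NNReal Topology

/-- `μ_γ(X) = -(1/γ) U⁻¹(E[U(γX)])`. -/
noncomputable def mu {Ω : Type*} [MeasurableSpace Ω] (P : Measure Ω)
    (U : ℝ → ℝ) (γ : ℝ) (X : Ω → ℝ) : ℝ :=
  -(1 / γ) * Function.invFun U (∫ ω, U (γ * X ω) ∂P)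

theorem mu_tendsto_neg_mean {Ω : Type*} [MeasurableSpace Ω] (P : Measure Ω)
    [IsProbabilityMeasure P] (U : ℝ → ℝ)
    (hC2 : ContDiff ℝ 2 U) (hconc : ConcaveOn ℝ Set.univ U)
    (hmono : StrictMono U) (hbdd : BddAbove (Set.range U))
    (hU'0 : 0 < deriv U 0)
    (X : Ω → ℝ) (hX : MemLp X ⊤ P) :
    Filter.Tendsto (fun γ => mu P U γ X)
      (nhdsWithin 0 (Set.Ioi (0 : ℝ))) (nhds (-∫ ω, X ω ∂P)) := by
  classical
  have hUdiff : Differentiable ℝ U := hC2.differentiable (by norm_num)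
  -- a.e. bound on X
  set M : ℝ := max (eLpNorm X ⊤ P).toReal 0 with hMdef
  have hM0 : 0 ≤ M := le_max_right _ _
  have hMfin : eLpNorm X ⊤ P < ⊤ := hX.2
  have hM : ∀ᵐ ω ∂P, |X ω| ≤ M := by
    have h := enorm_ae_le_eLpNormEssSup X P
    filter_upwards [h] with ω hω
    have : (‖X ω‖₊ : ℝ≥0∞) ≤ eLpNorm X ⊤ P := by
      rwa [eLpNorm_exponent_top]
    have h2 : (‖X ω‖₊ : ℝ) ≤ (eLpNorm X ⊤ P).toReal := by
      have := ENNReal.toReal_mono hMfin.ne this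
      simpa using this
    calc |X ω| = (‖X ω‖₊ : ℝ) := by simp [Real.norm_eq_abs]
    _ ≤ (eLpNorm X ⊤ P).toReal := h2
    _ ≤ M := le_max_left _ _
  -- bound on deriv U on [-M, M]
  obtain ⟨C, hC⟩ := (isCompact_Icc (a := -M) (b := M)).exists_bound_of_continuousOn
    (hC2.continuous_deriv one_le_two).continuousOn
  have hC0 : 0 ≤ C := le_trans (norm_nonneg _) (hC 0 ⟨neg_nonpos.2 hM0, hM0⟩)
  have hXint : Integrable X P := hX.integrable le_top
  -- derivative of γ ↦ ∫ U(γ X) at 0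
  have hF_meas : ∀ᶠ γ in nhds (0 : ℝ), AEStronglyMeasurable (fun ω => U (γ * X ω)) P := by
    filter_upwards with γ
    exact hC2.continuous.comp_aestronglyMeasurable (hX.1.const_mul γ)
  have hF_int : Integrable (fun ω => U ((0 : ℝ) * X ω)) P := by
    have : (fun ω => U ((0 : ℝ) * X ω)) = fun _ => U 0 := by
      funext ω; rw [zero_mul]
    rw [this]; exact integrable_const _
  have hF'_meas : AEStronglyMeasurable (fun ω => deriv U ((0 : ℝ) * X ω) * X ω) P := by
    exact (((hC2.continuous_deriv one_le_two).comp_aestronglyMeasurable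
      (hX.1.const_mul 0)).mul hX.1)
  have h_bound : ∀ᵐ ω ∂P, ∀ γ ∈ Metric.ball (0 : ℝ) 1,
      ‖deriv U (γ * X ω) * X ω‖ ≤ C * M := by
    filter_upwards [hM] with ω hω γ hγ
    have hγ1 : |γ| ≤ 1 := le_of_lt (by simpa [Real.dist_eq] using hγ)
    have hmem : γ * X ω ∈ Set.Icc (-M) M := by
      have : |γ * X ω| ≤ M := by
        rw [abs_mul]
        calc |γ| * |X ω| ≤ 1 * M := by
              apply mul_le_mul hγ1 hω (abs_nonneg _) zero_le_one
        _ = M := one_mul M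
      exact abs_le.mp this
    rw [norm_mul]
    exact mul_le_mul (hC _ hmem) (by simpa [Real.norm_eq_abs] using hω)
      (norm_nonneg _) hC0
  have h_diff : ∀ᵐ ω ∂P, ∀ γ ∈ Metric.ball (0 : ℝ) 1,
      HasDerivAt (fun γ => U (γ * X ω)) (deriv U (γ * X ω) * X ω) γ := by
    filter_upwards with ω γ _
    have h1 : HasDerivAt (fun γ : ℝ => γ * X ω) (X ω) γ := by
      simpa using (hasDerivAt_id γ).mul_const (X ω)
    exact (hUdiff.differentiableAt.hasDerivAt).comp γ h1
  have hf : HasDerivAt (fun γ => ∫ ω, U (γ * X ω) ∂P)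
      (∫ ω, deriv U ((0 : ℝ) * X ω) * X ω ∂P) 0 :=
    (hasDerivAt_integral_of_dominated_loc_of_deriv_le (Metric.ball_mem_nhds 0 one_pos) hF_meas hF_int hF'_meas
      h_bound (integrable_const _) h_diff).2
  have hval : (∫ ω, deriv U ((0 : ℝ) * X ω) * X ω ∂P) = deriv U 0 * ∫ ω, X ω ∂P := by
    simp only [zero_mul]
    exact integral_const_mul _ _
  rw [hval] at hf
  -- derivative of invFun U at U 0
  have hUstrict : HasStrictDerivAt U (deriv U 0) 0 :=
    hC2.contDiffAt.hasStrictDerivAt (by norm_num)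
  have hinv : HasStrictDerivAt (Function.invFun U) (deriv U 0)⁻¹ (U 0) :=
    hUstrict.to_local_left_inverse (ne_of_gt hU'0)
      (Filter.Eventually.of_forall fun x => Function.leftInverse_invFun hmono.injective x)
  -- value at 0
  have hf0 : (∫ ω, U ((0 : ℝ) * X ω) ∂P) = U 0 := by
    simp
  -- compose
  set g : ℝ → ℝ := fun γ => Function.invFun U (∫ ω, U (γ * X ω) ∂P) with hg
  have hgderiv : HasDerivAt g ((deriv U 0)⁻¹ * (deriv U 0 * ∫ ω, X ω ∂P)) 0 := by
    have := hinv.hasDerivAt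
    rw [← hf0] at this
    exact this.comp 0 hf
  have hgd : HasDerivAt g (∫ ω, X ω ∂P) 0 := by
    have : (deriv U 0)⁻¹ * (deriv U 0 * ∫ ω, X ω ∂P) = ∫ ω, X ω ∂P := by
      field_simp
    rwa [this] at hgderiv
  have hg0 : g 0 = 0 := by
    rw [hg]
    simp only [hf0]
    exact Function.leftInverse_invFun hmono.injective 0
  -- slope limit
  have hslope : Filter.Tendsto (slope g 0) (nhdsWithin 0 {(0 : ℝ)}ᶜ)
      (nhds (∫ ω, X ω ∂P)) := hasDerivAt_iff_tendsto_slope.mp hgd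
  have hneg : Filter.Tendsto (fun γ => -slope g 0 γ) (nhdsWithin 0 {(0 : ℝ)}ᶜ)
      (nhds (-∫ ω, X ω ∂P)) := hslope.neg
  have hmonoF : nhdsWithin (0 : ℝ) (Set.Ioi 0) ≤ nhdsWithin 0 {(0 : ℝ)}ᶜ :=
    nhdsWithin_mono 0 (fun x hx => ne_of_gt hx)
  refine (hneg.mono_left hmonoF).congr' ?_
  filter_upwards [self_mem_nhdsWithin] with γ hγ
  have hγne : γ ≠ 0 := ne_of_gt hγ
  rw [slope_def_field, hg0]
  show -((g γ - 0) / (γ - 0)) = mu P U γ X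
  rw [mu, hg]
  field_simp
  ring
end

section
/- Let U be a concave, strictly increasing, bounded-above C^2 utility with U(∞) := lim_{x→∞} U(x), and suppose that for all x₁ > x₂, (U(γx₁) - U(∞))/(U(γx₂) - U(∞)) → 0 as γ → ∞. Then for every X ∈ L^∞, μ_γ(X) → -ess inf X as γ → ∞. -/
open MeasureTheory

theorem mu_tendsto_neg_essInf {Ω : Type*} [MeasurableSpace Ω] (P : Measure Ω)
    [IsProbabilityMeasure P] (U : ℝ → ℝ)
    (hC2 : ContDiff ℝ 2 U) (hconc : ConcaveOn ℝ Set.univ U)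
    (hmono : StrictMono U) (hbdd : BddAbove (Set.range U))
    (Uinf : ℝ) (hUinf : Filter.Tendsto U Filter.atTop (nhds Uinf))
    (hratio : ∀ x₁ x₂ : ℝ, x₂ < x₁ →
      Filter.Tendsto (fun γ => (U (γ * x₁) - Uinf) / (U (γ * x₂) - Uinf))
        Filter.atTop (nhds 0))
    (X : Ω → ℝ) (hX : MemLp X ⊤ P) :
    Filter.Tendsto (fun γ => mu P U γ X) Filter.atTop (nhds (-essInf X P)) := by
  haveI : (ae P).NeBot := ae_neBot.mpr (IsProbabilityMeasure.ne_zero P)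
  have hUcont : Continuous U := hC2.continuous
  have hUle : ∀ x, U x ≤ Uinf := fun x => hmono.monotone.ge_of_tendsto hUinf x
  have hUlt : ∀ x, U x < Uinf := fun x =>
    lt_of_lt_of_le (hmono (lt_add_one x)) (hUle (x + 1))
  -- measurable representative
  obtain ⟨Y, hYmeas, hXY⟩ : ∃ Y : Ω → ℝ, Measurable Y ∧ X =ᵐ[P] Y :=
    ⟨hX.1.aemeasurable.mk X, hX.1.aemeasurable.measurable_mk, hX.1.aemeasurable.ae_eq_mk⟩
  -- essential bound
  obtain ⟨C, hC⟩ : ∃ C : ℝ, ∀ᵐ ω ∂P, |Y ω| ≤ C := by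
    refine ⟨(eLpNormEssSup X P).toReal, ?_⟩
    have hfin : eLpNormEssSup X P ≠ ⊤ := by
      have := hX.2
      rwa [eLpNorm_exponent_top, lt_top_iff_ne_top] at this
    filter_upwards [ae_le_eLpNormEssSup (f := X) (μ := P), hXY] with ω h1 h2
    rw [← h2, ← Real.norm_eq_abs]
    have : (‖X ω‖₊ : ENNReal).toReal ≤ (eLpNormEssSup X P).toReal :=
      (ENNReal.toReal_le_toReal (by simp) hfin).2 h1
    simpa using this
  -- integrability
  have hint : ∀ γ : ℝ, Integrable (fun ω => U (γ * Y ω)) P := by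
    intro γ
    have hmeas : AEStronglyMeasurable (fun ω => U (γ * Y ω)) P :=
      (hUcont.measurable.comp (hYmeas.const_mul γ)).aestronglyMeasurable
    refine (integrable_const (max |U (-(|γ| * C))| |U (|γ| * C)|)).mono' hmeas ?_
    filter_upwards [hC] with ω h
    have habs : |γ * Y ω| ≤ |γ| * C := by
      rw [abs_mul]
      exact mul_le_mul_of_nonneg_left h (abs_nonneg γ)
    obtain ⟨hl, hr⟩ := abs_le.mp habs
    rw [Real.norm_eq_abs]
    exact abs_le_max_abs_abs (hmono.monotone hl) (hmono.monotone hr)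
  have h_m_le : ∀ᵐ ω ∂P, essInf Y P ≤ Y ω := by
    refine ae_essInf_le ⟨-C, Filter.eventually_map.mpr ?_⟩
    filter_upwards [hC] with ω h
    exact (abs_le.mp h).1
  set m : ℝ := essInf Y P with hm
  -- key eventual bounds
  have key : ∀ ε : ℝ, 0 < ε → ∀ᶠ γ : ℝ in Filter.atTop,
      -m - 2 * ε ≤ mu P U γ X ∧ mu P U γ X ≤ -m := by
    intro ε hε
    set A : Set Ω := {ω | Y ω < m + ε} with hAdef
    have hA : MeasurableSet A := hYmeas measurableSet_Iio
    have hpA : P A ≠ 0 := by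
      intro h0
      have hae : ∀ᵐ ω ∂P, m + ε ≤ Y ω := by
        rw [ae_iff]
        simpa [hAdef, not_le] using h0
      have hcb : Filter.IsCoboundedUnder (· ≥ ·) (ae P) Y :=
        Filter.isCoboundedUnder_ge_of_eventually_le (ae P)
          (hC.mono fun ω h => (abs_le.mp h).2)
      have : m + ε ≤ essInf Y P := Filter.le_liminf_of_le hcb hae
      have : m + ε ≤ m := by rwa [← hm] at this
      linarith
    set p : ℝ := (P A).toReal with hpdef
    have hp : 0 < p := ENNReal.toReal_pos hpA (measure_ne_top P A)
    have hlt : m + ε < m + 2 * ε := by linarith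
    filter_upwards [Filter.eventually_gt_atTop 0,
      (hratio (m + 2 * ε) (m + ε) hlt).eventually_lt_const hp] with γ hγ hrat
    have den_neg : U (γ * (m + ε)) - Uinf < 0 := sub_neg.mpr (hUlt _)
    have h2 : p * (U (γ * (m + ε)) - Uinf) < U (γ * (m + 2 * ε)) - Uinf :=
      (div_lt_iff_of_neg den_neg).mp hrat
    set I : ℝ := ∫ ω, U (γ * Y ω) ∂P with hIdef
    -- upper bound on the integral
    have hsplit : (∫ ω in A, U (γ * Y ω) ∂P) + ∫ ω in Aᶜ, U (γ * Y ω) ∂P = I :=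
      integral_add_compl hA (hint γ)
    have hIA : ∫ ω in A, U (γ * Y ω) ∂P ≤ p * U (γ * (m + ε)) := by
      have := setIntegral_mono_on ((hint γ).integrableOn)
        ((integrableOn_const_iff enorm_ne_top).mpr (Or.inr (measure_lt_top P A))) hA
        (fun ω hω => hmono.monotone
          (mul_le_mul_of_nonneg_left (le_of_lt hω) hγ.le))
      simpa [setIntegral_const, smul_eq_mul, measureReal_def] using this
    have hIAc : ∫ ω in Aᶜ, U (γ * Y ω) ∂P ≤ (P Aᶜ).toReal * Uinf := by
      have := setIntegral_mono_on ((hint γ).integrableOn)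
        ((integrableOn_const_iff enorm_ne_top).mpr (Or.inr (measure_lt_top P Aᶜ))) hA.compl
        (fun ω _ => hUle (γ * Y ω))
      simpa [setIntegral_const, smul_eq_mul, measureReal_def] using this
    have hcompl : (P Aᶜ).toReal = 1 - p := by
      rw [measure_compl hA (measure_ne_top P A)]
      rw [measure_univ]
      rw [ENNReal.toReal_sub_of_le prob_le_one (by simp)]
      simp [hpdef]
    have hIu' : I ≤ p * U (γ * (m + ε)) + (1 - p) * Uinf := by
      rw [← hsplit]
      have := add_le_add hIA hIAc
      rwa [hcompl] at this
    have hIu : I ≤ U (γ * (m + 2 * ε)) := by nlinarith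
    -- lower bound on the integral
    have hIl : U (γ * m) ≤ I := by
      have hae : ∀ᵐ ω ∂P, U (γ * m) ≤ U (γ * Y ω) := by
        filter_upwards [h_m_le] with ω h
        exact hmono.monotone (mul_le_mul_of_nonneg_left h hγ.le)
      calc U (γ * m) = ∫ _ω, U (γ * m) ∂P := by simp
        _ ≤ I := integral_mono_ae (integrable_const _) (hint γ) hae
    -- I is in the range of U
    have hmem : ∃ a, U a = I := by
      have h1 : γ * m ≤ γ * (m + 2 * ε) := by nlinarith
      have := intermediate_value_Icc h1 hUcont.continuousOn ⟨hIl, hIu⟩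
      obtain ⟨x, _, hx⟩ := this
      exact ⟨x, hx⟩
    set t : ℝ := Function.invFun U I with htdef
    have hUt : U t = I := Function.invFun_eq hmem
    have ht1 : γ * m ≤ t := hmono.le_iff_le.mp (by rw [hUt]; exact hIl)
    have ht2 : t ≤ γ * (m + 2 * ε) := hmono.le_iff_le.mp (by rw [hUt]; exact hIu)
    have hmuX : mu P U γ X = -(1 / γ) * t := by
      rw [mu, htdef, hIdef]
      congr 2
      exact integral_congr_ae (hXY.mono fun ω h => by simp only [h])
    have hγ' : (0:ℝ) < γ := hγ
    have h3 : m ≤ t / γ := (le_div_iff₀ hγ').mpr (by linarith [mul_comm γ m])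
    have h4 : t / γ ≤ m + 2 * ε :=
      (div_le_iff₀ hγ').mpr (by linarith [mul_comm γ (m + 2 * ε)])
    have heq : mu P U γ X = -(t / γ) := by
      rw [hmuX]; ring
    rw [heq]
    constructor <;> linarith
  -- conclude
  have hmm : essInf X P = m := essInf_congr_ae hXY
  rw [hmm, Metric.tendsto_nhds]
  intro ε hε
  filter_upwards [key (ε / 4) (by linarith)] with γ hγ
  obtain ⟨h1, h2⟩ := hγ
  rw [Real.dist_eq, abs_lt]
  constructor <;> linarith
end

section
/- Under the assumptions of the utility-based acceptability index framework, the index α satisfies arbitrage consistency: for X ∈ L^∞, X ≥ 0 almost surely if and only if α(X) = ∞. -/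
open MeasureTheory ENNReal

/-- Utility-based acceptability index `α(X) = sup {γ > 0 : μ_γ(X) ≤ 0}`,
with values in `[0, ∞]` and `sup ∅ = 0`. -/
noncomputable def alpha {Ω : Type*} [MeasurableSpace Ω] (P : Measure Ω)
    (U : ℝ → ℝ) (X : Ω → ℝ) : ℝ≥0∞ :=
  ⨆ γ ∈ {γ : ℝ | 0 < γ ∧ mu P U γ X ≤ 0}, ENNReal.ofReal γ

section Aux

variable {U : ℝ → ℝ}

/-- Every value of a strictly monotone function bounded above is strictly below the sup. -/
lemma U_lt_sSup (hmono : StrictMono U) (hbdd : BddAbove (Set.range U)) (x : ℝ) :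
    U x < sSup (Set.range U) :=
  lt_of_lt_of_le (hmono (lt_add_one x)) (le_csSup hbdd ⟨_, rfl⟩)

/-- A concave function lies below its secant line extended to the left. -/
lemma U_linear_bound (hconc : ConcaveOn ℝ Set.univ U) {x : ℝ} (hx : x ≤ 0) :
    U x ≤ U 0 + (U 1 - U 0) * x := by
  rcases eq_or_lt_of_le hx with h | h
  · subst h; simp
  · have hs := hconc.slope_anti_adjacent (Set.mem_univ x) (Set.mem_univ 1) h one_pos
    have h1 : U 1 - U 0 ≤ (U 0 - U x) / (0 - x) := by
      have : (U 1 - U 0) / (1 - 0) = U 1 - U 0 := by norm_num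
      rw [this] at hs; exact hs
    rw [le_div_iff₀ (by linarith : (0:ℝ) < 0 - x)] at h1
    nlinarith

/-- Surjectivity onto `(-∞, sup U)`. -/
lemma U_surj (hcont : Continuous U) (hconc : ConcaveOn ℝ Set.univ U)
    (hmono : StrictMono U) {y : ℝ} (hy : y < sSup (Set.range U)) :
    ∃ x, U x = y := by
  obtain ⟨_, ⟨b, rfl⟩, hb⟩ := exists_lt_of_lt_csSup (Set.range_nonempty U) hy
  have hc : (0:ℝ) < U 1 - U 0 := sub_pos.2 (hmono zero_lt_one)
  set a := min 0 ((y - U 0 - 1) / (U 1 - U 0)) with ha_def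
  have ha0 : a ≤ 0 := min_le_left _ _
  have h2 : (U 1 - U 0) * a ≤ y - U 0 - 1 :=
    (le_div_iff₀' hc).1 (min_le_right _ _)
  have ha : U a < y := by
    have := U_linear_bound hconc ha0
    linarith
  have hab : a < b := hmono.lt_iff_lt.1 (ha.trans hb)
  obtain ⟨x, _, hx⟩ := intermediate_value_Icc hab.le hcont.continuousOn ⟨ha.le, hb.le⟩
  exact ⟨x, hx⟩

/-- The composition `ω ↦ U (γ X ω)` is integrable for essentially bounded `X`. -/
lemma integrable_U_comp {Ω : Type*} [MeasurableSpace Ω] {P : Measure Ω}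
    [IsProbabilityMeasure P] (hcont : Continuous U) (hmono : StrictMono U)
    {X : Ω → ℝ} {C : ℝ} (hC : ∀ᵐ ω ∂P, |X ω| ≤ C)
    (hXm : AEStronglyMeasurable X P) (γ : ℝ) :
    Integrable (fun ω => U (γ * X ω)) P := by
  have hasm : AEStronglyMeasurable (fun ω => U (γ * X ω)) P :=
    hcont.comp_aestronglyMeasurable (hXm.const_mul γ)
  set D := |γ| * max C 0 with hD
  have hmem : MemLp (fun ω => U (γ * X ω)) ⊤ P := by
    refine memLp_top_of_bound hasm (max (U D) (-(U (-D)))) ?_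
    filter_upwards [hC] with ω hω
    have hb : |γ * X ω| ≤ D := by
      rw [abs_mul]
      exact mul_le_mul_of_nonneg_left (hω.trans (le_max_left _ _)) (abs_nonneg _)
    rw [abs_le] at hb
    rw [Real.norm_eq_abs, abs_le]
    constructor
    · have := hmono.monotone hb.1
      have h2 := le_max_right (U D) (-(U (-D)))
      linarith
    · exact (hmono.monotone hb.2).trans (le_max_left _ _)
  exact memLp_one_iff_integrable.1 (hmem.mono_exponent le_top)

end Aux

theorem alpha_arbitrage_consistent {Ω : Type*} [MeasurableSpace Ω] (P : Measure Ω)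
    [IsProbabilityMeasure P] (U : ℝ → ℝ)
    (hC2 : ContDiff ℝ 2 U) (hconc : ConcaveOn ℝ Set.univ U)
    (hmono : StrictMono U) (hbdd : BddAbove (Set.range U))
    (hreg : ∀ (X : Ω → ℝ), MemLp X ⊤ P → ∀ γ₁ γ₂ : ℝ, 0 < γ₁ → γ₁ ≤ γ₂ →
      mu P U γ₁ X ≤ mu P U γ₂ X)
    (X : Ω → ℝ) (hX : MemLp X ⊤ P) :
    (∀ᵐ ω ∂P, 0 ≤ X ω) ↔ alpha P U X = ⊤ := by
  have hcont : Continuous U := hC2.continuous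
  set M := sSup (Set.range U) with hM
  have hltM : ∀ x, U x < M := U_lt_sSup hmono hbdd
  -- essential bound on X
  obtain ⟨C, hC⟩ : ∃ C : ℝ, ∀ᵐ ω ∂P, |X ω| ≤ C := by
    refine ⟨(eLpNormEssSup X P).toNNReal, ?_⟩
    have hlt : eLpNormEssSup X P < ⊤ := by
      have := hX.2; rwa [eLpNorm_exponent_top] at this
    filter_upwards [ae_le_eLpNormEssSup (f := X) (μ := P)] with ω hω
    have h2 : ‖X ω‖₊ ≤ (eLpNormEssSup X P).toNNReal :=
      ENNReal.coe_le_coe.1 (by rwa [ENNReal.coe_toNNReal hlt.ne])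
    rw [← Real.norm_eq_abs, ← coe_nnnorm]
    exact NNReal.coe_le_coe.2 h2
  have hint : ∀ γ : ℝ, Integrable (fun ω => U (γ * X ω)) P :=
    fun γ => integrable_U_comp hcont hmono hC hX.aestronglyMeasurable γ
  -- the expected utility is always strictly below M
  have hEltM : ∀ γ : ℝ, (∫ ω, U (γ * X ω) ∂P) < M := by
    intro γ
    have hub : (∫ ω, U (γ * X ω) ∂P) ≤ U (|γ| * max C 0) := by
      have : (∫ ω, U (γ * X ω) ∂P) ≤ ∫ _, U (|γ| * max C 0) ∂P := by
        refine integral_mono_ae (hint γ) (integrable_const _) ?_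
        filter_upwards [hC] with ω hω
        refine hmono.monotone ?_
        calc γ * X ω ≤ |γ * X ω| := le_abs_self _
          _ = |γ| * |X ω| := abs_mul _ _
          _ ≤ |γ| * max C 0 :=
            mul_le_mul_of_nonneg_left (hω.trans (le_max_left _ _)) (abs_nonneg _)
      simpa using this
    exact hub.trans_lt (hltM _)
  have hinvU : ∀ {y : ℝ}, y < M → U (Function.invFun U y) = y := by
    intro y hy
    exact Function.invFun_eq (U_surj hcont hconc hmono hy)
  constructor
  · -- forward direction
    intro hX0
    have hS : ∀ γ : ℝ, 0 < γ → 0 < γ ∧ mu P U γ X ≤ 0 := by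
      intro γ hγ
      refine ⟨hγ, ?_⟩
      have hlb : U 0 ≤ ∫ ω, U (γ * X ω) ∂P := by
        have : (∫ _, U 0 ∂P) ≤ ∫ ω, U (γ * X ω) ∂P := by
          refine integral_mono_ae (integrable_const _) (hint γ) ?_
          filter_upwards [hX0] with ω hω
          exact hmono.monotone (by positivity)
        simpa using this
      have hinv : U (Function.invFun U (∫ ω, U (γ * X ω) ∂P)) = ∫ ω, U (γ * X ω) ∂P :=
        hinvU (hEltM γ)
      have hv : 0 ≤ Function.invFun U (∫ ω, U (γ * X ω) ∂P) := by
        have : U 0 ≤ U (Function.invFun U (∫ ω, U (γ * X ω) ∂P)) := by rw [hinv]; exact hlb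
        exact hmono.le_iff_le.1 this
      simp only [mu]
      have h1 : (0:ℝ) ≤ (1 / γ) * Function.invFun U (∫ ω, U (γ * X ω) ∂P) :=
        mul_nonneg (by positivity) hv
      linarith [h1]
    rw [eq_top_iff, ← ENNReal.iSup_natCast]
    refine iSup_le fun n => ?_
    calc (n : ℝ≥0∞) = ENNReal.ofReal n := by simp [ENNReal.ofReal_natCast]
      _ ≤ ENNReal.ofReal (n + 1) := ENNReal.ofReal_le_ofReal (by linarith)
      _ ≤ alpha P U X := by
        refine le_iSup₂_of_le ((n : ℝ) + 1) ?_ le_rfl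
        exact hS _ (by positivity)
  · -- backward direction
    intro htop
    by_contra hneg
    -- measurable representative
    obtain ⟨X', hX'm, hXX'⟩ :=
      hX.aestronglyMeasurable.aemeasurable
    -- P {X' < 0} ≠ 0
    have hne : P {ω | X' ω < 0} ≠ 0 := by
      intro h0
      apply hneg
      have hsub : {ω | ¬ 0 ≤ X ω} ⊆ {ω | X ω ≠ X' ω} ∪ {ω | X' ω < 0} := by
        intro ω hω
        by_cases h : X ω = X' ω
        · right; simp only [Set.mem_setOf_eq, not_le] at hω ⊢; rwa [← h]
        · left; exact h
      rw [ae_iff]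
      refine measure_mono_null hsub (le_antisymm ?_ zero_le)
      calc P ({ω | X ω ≠ X' ω} ∪ {ω | X' ω < 0})
          ≤ P {ω | X ω ≠ X' ω} + P {ω | X' ω < 0} := measure_union_le _ _
        _ = 0 := by rw [h0, add_zero]; exact ae_iff.1 hXX'
    -- find ε with P {X' ≤ -ε} ≠ 0
    obtain ⟨n, hn⟩ : ∃ n : ℕ, P {ω | X' ω ≤ -(1 / (n + 1))} ≠ 0 := by
      by_contra hall
      push_neg at hall
      apply hne
      have : {ω | X' ω < 0} ⊆ ⋃ n : ℕ, {ω | X' ω ≤ -(1 / (n + 1))} := by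
        intro ω hω
        simp only [Set.mem_setOf_eq] at hω
        obtain ⟨n, hn⟩ := exists_nat_one_div_lt (show (0:ℝ) < -X' ω by linarith)
        exact Set.mem_iUnion.2 ⟨n, by simp only [Set.mem_setOf_eq]; linarith⟩
      exact measure_mono_null this (measure_iUnion_null hall)
    set ε : ℝ := 1 / (n + 1) with hε_def
    have hε : 0 < ε := by positivity
    set A : Set Ω := {ω | X' ω ≤ -ε} with hA_def
    have hAmeas : MeasurableSet A := hX'm (measurableSet_Iic (a := -ε))
    set p : ℝ := (P A).toReal with hp_def
    have hp : 0 < p := ENNReal.toReal_pos hn (measure_ne_top _ _)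
    set q : ℝ := (P Aᶜ).toReal with hq_def
    have hq0 : 0 ≤ q := ENNReal.toReal_nonneg
    have hc : (0:ℝ) < U 1 - U 0 := sub_pos.2 (hmono zero_lt_one)
    set c : ℝ := U 1 - U 0 with hc_def
    -- choose γ₀ large enough
    set R : ℝ := p * U 0 + M * q - U 0 with hR_def
    set γ₀ : ℝ := max 1 ((R + 1) / (p * c * ε)) with hγ₀_def
    have hγ₀pos : (0:ℝ) < γ₀ := lt_of_lt_of_le one_pos (le_max_left _ _)
    have hγbig : R < p * c * ε * γ₀ := by
      have hpce : (0:ℝ) < p * c * ε := by positivity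
      have : (R + 1) / (p * c * ε) ≤ γ₀ := le_max_right _ _
      have := (div_le_iff₀ hpce).1 this
      nlinarith
    -- bound the expected utility
    have hEbound : (∫ ω, U (γ₀ * X ω) ∂P) < U 0 := by
      have hub : (∫ ω, U (γ₀ * X ω) ∂P)
          ≤ ∫ ω, (A.indicator (fun _ => U (-(γ₀ * ε))) ω
              + Aᶜ.indicator (fun _ => M) ω) ∂P := by
        refine integral_mono_ae (hint γ₀) ?_ ?_
        · exact ((integrable_const _).indicator hAmeas).add
            ((integrable_const _).indicator hAmeas.compl)
        · filter_upwards [hXX'] with ω hω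
          by_cases hA : ω ∈ A
          · have hXω : X' ω ≤ -ε := hA
            have : γ₀ * X ω ≤ -(γ₀ * ε) := by
              rw [hω]; nlinarith
            simp only [Set.indicator_of_mem hA, Set.indicator_of_notMem
              (by simp [hA] : ω ∉ Aᶜ), add_zero]
            exact hmono.monotone this
          · simp only [Set.indicator_of_notMem hA, Set.indicator_of_mem
              (by simp [hA] : ω ∈ Aᶜ), zero_add]
            exact (hltM _).le
      have heval : (∫ ω, (A.indicator (fun _ => U (-(γ₀ * ε))) ω
          + Aᶜ.indicator (fun _ => M) ω) ∂P) = U (-(γ₀ * ε)) * p + M * q := by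
        rw [integral_add ((integrable_const _).indicator hAmeas)
          ((integrable_const _).indicator hAmeas.compl),
          integral_indicator hAmeas, integral_indicator hAmeas.compl]
        simp [mul_comm, hp_def, hq_def, measureReal_def]
      have hUlin : U (-(γ₀ * ε)) ≤ U 0 + c * (-(γ₀ * ε)) :=
        U_linear_bound hconc (by nlinarith)
      have : (∫ ω, U (γ₀ * X ω) ∂P) ≤ (U 0 + c * (-(γ₀ * ε))) * p + M * q := by
        rw [heval] at hub
        nlinarith
      nlinarith
    -- hence μ_{γ₀} > 0
    have hmuγ₀ : 0 < mu P U γ₀ X := by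
      have hE : (∫ ω, U (γ₀ * X ω) ∂P) < M := hEltM γ₀
      have hinv : U (Function.invFun U (∫ ω, U (γ₀ * X ω) ∂P)) = ∫ ω, U (γ₀ * X ω) ∂P :=
        hinvU hE
      have hv : Function.invFun U (∫ ω, U (γ₀ * X ω) ∂P) < 0 := by
        have : U (Function.invFun U (∫ ω, U (γ₀ * X ω) ∂P)) < U 0 := by
          rw [hinv]; exact hEbound
        exact hmono.lt_iff_lt.1 this
      simp only [mu]
      have heq : -(1 / γ₀) * Function.invFun U (∫ ω, U (γ₀ * X ω) ∂P)
          = (1 / γ₀) * (-(Function.invFun U (∫ ω, U (γ₀ * X ω) ∂P))) := by ring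
      rw [heq]
      exact mul_pos (by positivity) (by linarith)
    -- so the acceptability set is bounded by γ₀
    have hbound : alpha P U X ≤ ENNReal.ofReal γ₀ := by
      refine iSup₂_le fun γ' hγ' => ?_
      obtain ⟨hγ'pos, hγ'mu⟩ := hγ'
      have : γ' ≤ γ₀ := by
        by_contra hlt
        push_neg at hlt
        have := hreg X hX γ₀ γ' hγ₀pos hlt.le
        linarith
      exact ENNReal.ofReal_le_ofReal this
    rw [htop] at hbound
    exact absurd (top_le_iff.1 hbound) ENNReal.ofReal_ne_top
end

section
/- Expectation consistency of the utility-based acceptability index: if E[X] < 0 then α(X) = 0, and if E[X] > 0 then α(X) > 0, for X ∈ L^∞. -/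
open MeasureTheory ENNReal

private lemma invFun_spec (U : ℝ → ℝ) (hc : Continuous U) (hm : StrictMono U)
    {y a b : ℝ} (h1 : U a ≤ y) (h2 : y ≤ U b) : U (Function.invFun U y) = y := by
  have hsub := intermediate_value_Icc (min_le_max (a := a) (b := b)) hc.continuousOn
  have hy : y ∈ Set.Icc (U (min a b)) (U (max a b)) :=
    ⟨le_trans (hm.monotone (min_le_left a b)) h1,
     le_trans h2 (hm.monotone (le_max_right a b))⟩
  obtain ⟨x, -, hx⟩ := hsub hy
  exact Function.invFun_eq ⟨x, hx⟩

theorem alpha_expectation_consistent {Ω : Type*} [MeasurableSpace Ω] (P : Measure Ω)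
    [IsProbabilityMeasure P] (U : ℝ → ℝ)
    (hC2 : ContDiff ℝ 2 U) (hconc : ConcaveOn ℝ Set.univ U)
    (hmono : StrictMono U) (hbdd : BddAbove (Set.range U))
    (hreg : ∀ (X : Ω → ℝ), MemLp X ⊤ P → ∀ γ₁ γ₂ : ℝ, 0 < γ₁ → γ₁ ≤ γ₂ →
      mu P U γ₁ X ≤ mu P U γ₂ X)
    (X : Ω → ℝ) (hX : MemLp X ⊤ P) :
    ((∫ ω, X ω ∂P) < 0 → alpha P U X = 0) ∧
    (0 < (∫ ω, X ω ∂P) → 0 < alpha P U X) := by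
  have hd1 : Differentiable ℝ U := hC2.differentiable (by norm_num)
  have hcont : Continuous U := hd1.continuous
  have h2' : ContDiff ℝ 1 (deriv U) := by
    have h21 : ContDiff ℝ (1 + 1) U := by
      have : ((2 : ℕ) : WithTop ℕ∞) = 1 + 1 := by norm_num
      rw [← this]; exact_mod_cast hC2
    exact (contDiff_succ_iff_deriv.mp h21).2.2
  have hd2 : Differentiable ℝ (deriv U) := h2'.differentiable one_ne_zero
  have hcont2 : Continuous (deriv (deriv U)) := (contDiff_one_iff_deriv.mp h2').2
  set D0 := deriv U 0 with hD0def
  -- D0 > 0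
  have hD0pos : 0 < D0 := by
    have hs := hconc.slope_le_deriv (Set.mem_univ (0 : ℝ)) (Set.mem_univ 1) one_pos
      (hd1 0)
    rw [slope_def_field] at hs
    have h01 : U 0 < U 1 := hmono one_pos
    rw [hD0def]
    nlinarith
  -- global tangent-line bound (concavity)
  have htan : ∀ t : ℝ, U t ≤ U 0 + D0 * t := by
    intro t
    rcases lt_trichotomy t 0 with ht | rfl | ht
    · have hs := hconc.deriv_le_slope (Set.mem_univ t) (Set.mem_univ (0 : ℝ)) ht
        (hd1 0)
      rw [slope_def_field, le_div_iff₀ (by linarith : (0:ℝ) < 0 - t)] at hs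
      nlinarith
    · simp
    · have hs := hconc.slope_le_deriv (Set.mem_univ (0 : ℝ)) (Set.mem_univ t) ht
        (hd1 0)
      rw [slope_def_field, div_le_iff₀ (by linarith : (0:ℝ) < t - 0)] at hs
      nlinarith
  -- essential bound on X
  set M := (eLpNormEssSup X P).toReal with hMdef
  have hM0 : 0 ≤ M := ENNReal.toReal_nonneg
  have hMae : ∀ᵐ ω ∂P, |X ω| ≤ M := by
    have hlt : eLpNormEssSup X P < ⊤ := by
      have h := hX.2; rwa [eLpNorm_exponent_top] at h
    filter_upwards [ae_le_eLpNormEssSup (f := X) (μ := P)] with ω hω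
    have h1 : ((‖X ω‖₊ : ℝ≥0∞)).toReal ≤ M := ENNReal.toReal_mono hlt.ne hω
    simpa [Real.norm_eq_abs] using h1
  have hXint : Integrable X P := hX.integrable le_top
  -- integrability of U(γ X)
  have hbase : ∀ γ : ℝ, 0 < γ → Integrable (fun ω => U (γ * X ω)) P := by
    intro γ hγ
    have hmeas : AEStronglyMeasurable (fun ω => U (γ * X ω)) P :=
      hcont.comp_aestronglyMeasurable (hX.aestronglyMeasurable.const_mul γ)
    refine (MemLp.of_bound hmeas (|U (γ * M)| + |U (γ * (-M))|) ?_).integrable le_top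
    filter_upwards [hMae] with ω hω
    obtain ⟨hω1, hω2⟩ := abs_le.mp hω
    have hu1 : U (γ * X ω) ≤ U (γ * M) :=
      hmono.monotone (mul_le_mul_of_nonneg_left hω2 hγ.le)
    have hu2 : U (γ * (-M)) ≤ U (γ * X ω) :=
      hmono.monotone (mul_le_mul_of_nonneg_left hω1 hγ.le)
    rw [Real.norm_eq_abs, abs_le]
    constructor
    · nlinarith [le_abs_self (U (γ * M)), neg_abs_le (U (γ * (-M))), abs_nonneg (U (γ * M)),
        abs_nonneg (U (γ * (-M)))]
    · nlinarith [le_abs_self (U (γ * M)), abs_nonneg (U (γ * (-M)))]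
  -- lower bound for the integral (used for range membership)
  have hlowc : ∀ γ : ℝ, 0 < γ → U (γ * (-M)) ≤ ∫ ω, U (γ * X ω) ∂P := by
    intro γ hγ
    have h := integral_mono_ae (integrable_const (U (γ * (-M)))) (hbase γ hγ) ?_
    · simpa using h
    · filter_upwards [hMae] with ω hω
      exact hmono.monotone (mul_le_mul_of_nonneg_left (abs_le.mp hω).1 hγ.le)
  have hupc : ∀ γ : ℝ, 0 < γ → (∫ ω, U (γ * X ω) ∂P) ≤ U (γ * M) := by
    intro γ hγ
    have h := integral_mono_ae (hbase γ hγ) (integrable_const (U (γ * M))) ?_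
    · simpa using h
    · filter_upwards [hMae] with ω hω
      exact hmono.monotone (mul_le_mul_of_nonneg_left (abs_le.mp hω).2 hγ.le)
  constructor
  · -- E[X] < 0 → alpha = 0
    intro hEX
    have hempty : ∀ γ : ℝ, 0 < γ → ¬ mu P U γ X ≤ 0 := by
      intro γ hγ hle
      set y := ∫ ω, U (γ * X ω) ∂P with hydef
      have hup : y ≤ U 0 + (D0 * γ) * ∫ ω, X ω ∂P := by
        have hcomp : Integrable (fun ω => U 0 + (D0 * γ) * X ω) P :=
          (integrable_const (U 0)).add (hXint.const_mul _)
        have hae : (fun ω => U (γ * X ω)) ≤ᵐ[P] fun ω => U 0 + (D0 * γ) * X ω := by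
          refine Filter.Eventually.of_forall fun ω => ?_
          have h := htan (γ * X ω)
          rw [← mul_assoc] at h
          exact h
        have h := integral_mono_ae (hbase γ hγ) hcomp hae
        rwa [integral_add (integrable_const _) (hXint.const_mul _), integral_const,
          integral_const_mul, Measure.real, measure_univ, ENNReal.toReal_one, one_smul] at h
      have hylt : y < U 0 := by nlinarith [mul_pos hD0pos hγ]
      have heq : U (Function.invFun U y) = y :=
        invFun_spec U hcont hmono (hlowc γ hγ) hylt.le
      have hxneg : Function.invFun U y < 0 := by
        have : U (Function.invFun U y) < U 0 := by rw [heq]; exact hylt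
        exact hmono.lt_iff_lt.mp this
      have : 0 < mu P U γ X := by
        have h1 : 0 < (1 / γ) * (-(Function.invFun U y)) :=
          mul_pos (by positivity) (by linarith)
        rw [mu]; nlinarith
      linarith
    refine le_antisymm ?_ zero_le
    refine iSup₂_le fun γ hγ => absurd hγ.2 (hempty γ hγ.1)
  · -- E[X] > 0 → 0 < alpha
    intro hEX
    set EX := ∫ ω, X ω ∂P with hEXdef
    -- bound the second derivative on [-M, M]
    obtain ⟨C, hC⟩ := (isCompact_Icc (a := -M) (b := M)).exists_bound_of_continuousOn
      hcont2.continuousOn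
    have h0K : (0 : ℝ) ∈ Set.Icc (-M) M := ⟨by linarith, hM0⟩
    have hC0 : 0 ≤ C := le_trans (norm_nonneg _) (hC 0 h0K)
    -- Lipschitz bound on deriv U
    have hstepA : ∀ t ∈ Set.Icc (-M) M, |deriv U t - D0| ≤ C * |t| := by
      intro t ht
      have h := (convex_Icc (-M) M).norm_image_sub_le_of_norm_deriv_le (f := deriv U)
        (fun x _ => (hd2 x)) hC h0K ht
      simpa [Real.norm_eq_abs] using h
    -- quadratic lower bound
    have hstepB : ∀ t ∈ Set.Icc (-M) M, U 0 + D0 * t - C * t ^ 2 ≤ U t := by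
      intro t ht
      set S := Set.Icc (min 0 t) (max 0 t) with hSdef
      have hSK : S ⊆ Set.Icc (-M) M :=
        Set.Icc_subset_Icc (le_min (by linarith) ht.1) (max_le hM0 ht.2)
      have h0S : (0 : ℝ) ∈ S := ⟨min_le_left _ _, le_max_left _ _⟩
      have htS : t ∈ S := ⟨min_le_right _ _, le_max_right _ _⟩
      have hderiv : ∀ x : ℝ, deriv (fun s => U s - D0 * s) x = deriv U x - D0 := by
        intro x
        have h := ((hd1 x).hasDerivAt.sub ((hasDerivAt_id x).const_mul D0)).deriv
        simp only [id, mul_one] at h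
        exact h
      have hbound : ∀ x ∈ S, ‖deriv (fun s => U s - D0 * s) x‖ ≤ C * |t| := by
        intro x hx
        rw [hderiv, Real.norm_eq_abs]
        have hxt : |x| ≤ |t| := by
          rcases hx with ⟨hx1, hx2⟩
          rw [abs_le]
          constructor
          · calc -|t| ≤ min 0 t := le_min (neg_nonpos.mpr (abs_nonneg t)) (neg_abs_le t)
              _ ≤ x := hx1
          · exact le_trans hx2 (max_le (abs_nonneg t) (le_abs_self t))
        calc |deriv U x - D0| ≤ C * |x| := hstepA x (hSK hx)
          _ ≤ C * |t| := by nlinarith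
      have h := ((convex_Icc (min 0 t) (max 0 t)) :
          Convex ℝ S).norm_image_sub_le_of_norm_deriv_le (f := fun s => U s - D0 * s)
        (fun x _ => (hd1 x).sub ((differentiable_id.const_mul D0) x))
        hbound h0S htS
      rw [Real.norm_eq_abs, Real.norm_eq_abs] at h
      have habs := abs_le.mp h
      have ht2 : C * |t| * |t - 0| = C * t ^ 2 := by
        rw [sub_zero, mul_assoc, ← abs_mul]
        rw [show t * t = t ^ 2 by ring, abs_of_nonneg (sq_nonneg t)]
      rw [ht2] at habs
      have h1 : -(C * t ^ 2) ≤ U t - D0 * t - (U 0 - D0 * 0) := by simpa using habs.1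
      linarith
    -- choose γ
    set γ := min 1 (D0 * EX / (C * M ^ 2 + 1)) with hγdef
    have hγpos : 0 < γ :=
      lt_min one_pos (div_pos (mul_pos hD0pos hEX) (by positivity))
    have hγ1 : γ ≤ 1 := min_le_left _ _
    have hγkey : C * γ * M ^ 2 ≤ D0 * EX := by
      have h := (le_div_iff₀ (by positivity : (0:ℝ) < C * M ^ 2 + 1)).mp
        (min_le_right 1 (D0 * EX / (C * M ^ 2 + 1)))
      nlinarith
    -- lower bound on the integral
    have hlow : U 0 + D0 * γ * EX - C * γ ^ 2 * M ^ 2 ≤ ∫ ω, U (γ * X ω) ∂P := by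
      have hcomp : Integrable (fun ω => U 0 - C * γ ^ 2 * M ^ 2 + (D0 * γ) * X ω) P :=
        (integrable_const _).add (hXint.const_mul _)
      have hae : (fun ω => U 0 - C * γ ^ 2 * M ^ 2 + (D0 * γ) * X ω) ≤ᵐ[P]
          fun ω => U (γ * X ω) := by
        filter_upwards [hMae] with ω hω
        obtain ⟨hω1, hω2⟩ := abs_le.mp hω
        have htK : γ * X ω ∈ Set.Icc (-M) M := by
          constructor
          · nlinarith
          · nlinarith
        have hB := hstepB _ htK
        have hXsq : X ω ^ 2 ≤ M ^ 2 := sq_le_sq' hω1 hω2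
        have hsq : C * (γ * X ω) ^ 2 ≤ C * γ ^ 2 * M ^ 2 := by
          have h := mul_le_mul_of_nonneg_left hXsq (mul_nonneg hC0 (sq_nonneg γ))
          calc C * (γ * X ω) ^ 2 = C * γ ^ 2 * X ω ^ 2 := by ring
            _ ≤ C * γ ^ 2 * M ^ 2 := by nlinarith
        nlinarith
      have h := integral_mono_ae hcomp (hbase γ hγpos) hae
      rw [integral_add (integrable_const _) (hXint.const_mul _), integral_const,
        integral_const_mul, Measure.real, measure_univ, ENNReal.toReal_one, one_smul] at h
      rw [← hEXdef] at h
      linarith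
    have hU0le : U 0 ≤ ∫ ω, U (γ * X ω) ∂P := by
      have : C * γ ^ 2 * M ^ 2 ≤ D0 * γ * EX := by nlinarith
      linarith
    set y := ∫ ω, U (γ * X ω) ∂P with hydef
    have heq : U (Function.invFun U y) = y :=
      invFun_spec U hcont hmono hU0le (hupc γ hγpos)
    have hx0 : 0 ≤ Function.invFun U y := by
      have h : U 0 ≤ U (Function.invFun U y) := by rw [heq]; exact hU0le
      exact hmono.le_iff_le.mp h
    have hmu : mu P U γ X ≤ 0 := by
      have h1 : 0 ≤ (1 / γ) * Function.invFun U y := by positivity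
      rw [mu]; nlinarith
    calc (0 : ℝ≥0∞) < ENNReal.ofReal γ := ENNReal.ofReal_pos.mpr hγpos
      _ ≤ alpha P U X := le_iSup₂_of_le γ ⟨hγpos, hmu⟩ le_rfl
end
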